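/- Let H be the bipartite graph with parts B = {u'_0,…,u'_{m-1}, v'_0,…,v'_{n-1}} and C = {c_1,…,c_{m+n}}, with edges u'_i c_i for 1 ≤ i ≤ m-1, u'_i c_{i+n+1} for 0 ≤ i ≤ m-1, v'_j c_j for 1 ≤ j ≤ n-1, and v'_j c_{j+m+1} for 0 ≤ j ≤ n-1. If gcd(m+1, n+1) = 1, then H has a perfect matching. -/

import Mathlib

/-- One direction of the adjacency of the auxiliary graph `H`:
`u'_i` (resp. `v'_j`) is joined to `c_k`, where the vertex `.inr x : Fin (m+n)`
represents the color `x + 1`.  Thus `u'_i — c_i` (for `1 ≤ i`) becomes `k + 1 = i`,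
and `u'_i — c_{i+n+1}` becomes `k = i + n`; similarly for `v'_j`. -/
def HRel (m n : ℕ) : ((Fin m ⊕ Fin n) ⊕ Fin (m + n)) → ((Fin m ⊕ Fin n) ⊕ Fin (m + n)) → Prop
  | .inl (.inl i), .inr k => (k : ℕ) + 1 = i ∨ (k : ℕ) = i + n
  | .inl (.inr j), .inr k => (k : ℕ) + 1 = j ∨ (k : ℕ) = j + m
  | _, _ => False

/-- The auxiliary bipartite graph `H`. -/
def Hgraph (m n : ℕ) : SimpleGraph ((Fin m ⊕ Fin n) ⊕ Fin (m + n)) :=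
  SimpleGraph.fromRel (HRel m n)

namespace Stmt8Aux

/-- `sig = (n+1)⁻¹` in `ZMod (m+n+2)`. -/
noncomputable def sig (m n : ℕ) : ZMod (m + n + 2) := ((n : ZMod (m + n + 2)) + 1)⁻¹

/-- position function: `rho x = ((x+1) * (n+1)⁻¹).val`. -/
noncomputable def rho (m n : ℕ) (x : ℕ) : ℕ :=
  (((x : ZMod (m + n + 2)) + 1) * sig m n).val

noncomputable def Gfun (m n : ℕ) : Fin m ⊕ Fin n → Fin (m + n)
  | .inl i => if rho m n i < rho m n 0 then ⟨i.val - 1, by have := i.isLt; omega⟩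
              else ⟨i.val + n, by have := i.isLt; omega⟩
  | .inr j => if rho m n (j.val + m + 1) < rho m n 0 then ⟨j.val + m, by have := j.isLt; omega⟩
              else ⟨j.val - 1, by have := j.isLt; omega⟩

noncomputable def Ffun (m n : ℕ) (hm : 0 < m) (hn : 0 < n) (k : Fin (m + n)) : Fin m ⊕ Fin n :=
  if _ : rho m n (k.val + 1) < rho m n 0 then
    if h : k.val + 1 < m then .inl ⟨k.val + 1, h⟩
    else .inr ⟨(k.val + 1 - m - 1) % n, Nat.mod_lt _ hn⟩
  else
    if _ : n + 1 ≤ k.val + 1 then .inl ⟨(k.val + 1 - n - 1) % m, Nat.mod_lt _ hm⟩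
    else .inr ⟨(k.val + 1) % n, Nat.mod_lt _ hn⟩

lemma sig_mul {m n : ℕ} (hg : Nat.gcd (m + 1) (n + 1) = 1) :
    sig m n * ((n : ZMod (m + n + 2)) + 1) = 1 := by
  have hc : Nat.Coprime (n + 1) (m + n + 2) := by
    have h : m + n + 2 = (m + 1) + (n + 1) := by ring
    unfold Nat.Coprime
    rw [h, Nat.gcd_add_self_right, Nat.gcd_comm]
    exact hg
  have hu : IsUnit (((n + 1 : ℕ)) : ZMod (m + n + 2)) :=
    (ZMod.isUnit_iff_coprime _ _).2 hc
  have he : (((n + 1 : ℕ)) : ZMod (m + n + 2)) = (n : ZMod (m + n + 2)) + 1 := by push_cast; ring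
  rw [he] at hu
  exact ZMod.inv_mul_of_unit _ hu

/-- `(m + n + 2 : ZMod (m+n+2)) = 0` in pushed form. -/
lemma MM_zero (m n : ℕ) : (m : ZMod (m + n + 2)) + n + 2 = 0 := by
  have := ZMod.natCast_self (m + n + 2)
  push_cast at this
  linear_combination this

lemma cast_eq_zero_iff {m n : ℕ} (x : ℕ) :
    ((x : ℕ) : ZMod (m + n + 2)) = 0 ↔ (m + n + 2) ∣ x :=
  ZMod.natCast_eq_zero_iff _ _

/-- If `¬ (m+n+2) ∣ x + n + 2` then `π x ≠ -1`. -/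
lemma pi_ne_neg_one {m n : ℕ} (hg : Nat.gcd (m + 1) (n + 1) = 1) (x : ℕ)
    (h : ¬ (m + n + 2) ∣ (x + n + 2)) :
    ((x : ZMod (m + n + 2)) + 1) * sig m n ≠ -1 := by
  intro he
  apply h
  have h2 := congrArg (· * ((n : ZMod (m + n + 2)) + 1)) he
  simp only [mul_assoc, sig_mul hg, mul_one, neg_mul, one_mul] at h2
  have h3 : ((x + n + 2 : ℕ) : ZMod (m + n + 2)) = 0 := by
    push_cast
    linear_combination h2
  exact (cast_eq_zero_iff _).1 h3

lemma rho_period {m n : ℕ} (x : ℕ) : rho m n (x + (m + n + 2)) = rho m n x := by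
  unfold rho
  congr 2
  push_cast
  linear_combination MM_zero m n

lemma rho_shift {m n : ℕ} (hg : Nat.gcd (m + 1) (n + 1) = 1) (x : ℕ)
    (h : ¬ (m + n + 2) ∣ (x + n + 2)) :
    rho m n (x + (n + 1)) = rho m n x + 1 := by
  haveI : Fact (1 < m + n + 2) := ⟨by omega⟩
  unfold rho
  have key : ((((x + (n + 1) : ℕ)) : ZMod (m + n + 2)) + 1) * sig m n
      = ((x : ZMod (m + n + 2)) + 1) * sig m n + 1 := by
    have h1 : ((((x + (n + 1) : ℕ)) : ZMod (m + n + 2)) + 1)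
        = ((x : ZMod (m + n + 2)) + 1) + ((n : ZMod (m + n + 2)) + 1) := by
      push_cast; ring
    rw [h1, add_mul, mul_comm ((n : ZMod (m + n + 2)) + 1) (sig m n), sig_mul hg]
  rw [key]
  have hne := pi_ne_neg_one hg x h
  set y := ((x : ZMod (m + n + 2)) + 1) * sig m n with hy
  have hylt : y.val < m + n + 2 := ZMod.val_lt y
  have hyne : y.val ≠ m + n + 1 := by
    intro hv
    apply hne
    apply ZMod.val_injective
    rw [hv]
    have hval : (-1 : ZMod (m + n + 2)).val = m + n + 1 := by
      have h1 : ((m + n + 1 : ℕ) : ZMod (m + n + 2)) = -1 := by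
        push_cast
        linear_combination MM_zero m n
      rw [← h1, ZMod.val_cast_of_lt (by omega)]
    rw [hval]
  have hadd : (y + 1).val = y.val + (1 : ZMod (m + n + 2)).val := by
    apply ZMod.val_add_of_lt
    rw [ZMod.val_one]
    omega
  rw [hadd, ZMod.val_one]

lemma rho_zero_pos {m n : ℕ} (hg : Nat.gcd (m + 1) (n + 1) = 1) : 1 ≤ rho m n 0 := by
  haveI : Fact (1 < m + n + 2) := ⟨by omega⟩
  rcases Nat.eq_zero_or_pos (rho m n 0) with h | h
  · exfalso
    unfold rho at h
    rw [ZMod.val_eq_zero] at h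
    simp only [Nat.cast_zero, zero_add, one_mul] at h
    have := sig_mul hg
    rw [h, zero_mul] at this
    exact zero_ne_one this
  · exact h

/-- `rho (m+1) = rho 0 - 1 < rho 0`. -/
lemma rho_m1_lt {m n : ℕ} (hm : 0 < m) (hn : 0 < n) (hg : Nat.gcd (m + 1) (n + 1) = 1) :
    rho m n (m + 1) < rho m n 0 := by
  have hdvd : ¬ (m + n + 2) ∣ (m + 1 + n + 2) := by
    intro h
    have h1 : (m + n + 2) ∣ (m + 1 + n + 2 - (m + n + 2)) := Nat.dvd_sub h (dvd_refl _)
    have h2 : m + 1 + n + 2 - (m + n + 2) = 1 := by omega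
    rw [h2] at h1
    have := Nat.le_of_dvd one_pos h1
    omega
  have hs := rho_shift hg (m + 1) hdvd
  have hp : m + 1 + (n + 1) = 0 + (m + n + 2) := by ring
  rw [hp, rho_period] at hs
  have := rho_zero_pos (m := m) (n := n) hg
  omega

/-- `rho j = rho (j + m + 1) + 1` when `j + 1 < m + n + 2` and `m+n+2 ∤ j+1`. -/
lemma rho_jump {m n : ℕ} (hg : Nat.gcd (m + 1) (n + 1) = 1) (j : ℕ)
    (h : ¬ (m + n + 2) ∣ (j + 1)) :
    rho m n j = rho m n (j + m + 1) + 1 := by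
  have hdvd : ¬ (m + n + 2) ∣ (j + m + 1 + n + 2) := by
    intro hd
    have h1 : (m + n + 2) ∣ (j + m + 1 + n + 2 - (m + n + 2)) := Nat.dvd_sub hd (dvd_refl _)
    have h2 : j + m + 1 + n + 2 - (m + n + 2) = j + 1 := by omega
    rw [h2] at h1
    exact h h1
  have hs := rho_shift hg (j + m + 1) hdvd
  have hp : j + m + 1 + (n + 1) = j + (m + n + 2) := by ring
  rw [hp, rho_period] at hs
  omega

variable {m n : ℕ}

lemma Fa (hm : 0 < m) (hn : 0 < n) (k : Fin (m + n)) (h1 : rho m n (k.val + 1) < rho m n 0) (h2 : k.val + 1 < m) :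
    Ffun m n hm hn k = .inl ⟨k.val + 1, h2⟩ := by
  unfold Ffun; rw [dif_pos h1, dif_pos h2]

lemma Fb (hm : 0 < m) (hn : 0 < n) (k : Fin (m + n)) (h1 : rho m n (k.val + 1) < rho m n 0) (h2 : ¬ k.val + 1 < m) :
    Ffun m n hm hn k = .inr ⟨(k.val + 1 - m - 1) % n, Nat.mod_lt _ hn⟩ := by
  unfold Ffun; rw [dif_pos h1, dif_neg h2]

lemma Fc (hm : 0 < m) (hn : 0 < n) (k : Fin (m + n)) (h1 : ¬ rho m n (k.val + 1) < rho m n 0) (h2 : n + 1 ≤ k.val + 1) :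
    Ffun m n hm hn k = .inl ⟨(k.val + 1 - n - 1) % m, Nat.mod_lt _ hm⟩ := by
  unfold Ffun; rw [dif_neg h1, dif_pos h2]

lemma Fd (hm : 0 < m) (hn : 0 < n) (k : Fin (m + n)) (h1 : ¬ rho m n (k.val + 1) < rho m n 0) (h2 : ¬ n + 1 ≤ k.val + 1) :
    Ffun m n hm hn k = .inr ⟨(k.val + 1) % n, Nat.mod_lt _ hn⟩ := by
  unfold Ffun; rw [dif_neg h1, dif_neg h2]

lemma FG (hm : 0 < m) (hn : 0 < n) (hg : Nat.gcd (m + 1) (n + 1) = 1) (x : Fin m ⊕ Fin n) :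
    Ffun m n hm hn (Gfun m n x) = x := by
  match x with
  | .inl i =>
    by_cases hA : rho m n i.val < rho m n 0
    · have hi1 : 1 ≤ i.val := by
        rcases Nat.eq_zero_or_pos i.val with h0 | h0
        · rw [h0] at hA; omega
        · exact h0
      have hG : Gfun m n (.inl i) = ⟨i.val - 1, by have := i.isLt; omega⟩ := by
        simp only [Gfun, if_pos hA]
      rw [hG]
      have hc : i.val - 1 + 1 = i.val := by omega
      have h1 : rho m n (i.val - 1 + 1) < rho m n 0 := by rw [hc]; exact hA
      have h2 : i.val - 1 + 1 < m := by rw [hc]; exact i.isLt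
      rw [Fa hm hn ⟨i.val - 1, by have := i.isLt; omega⟩ h1 h2]
      congr 1
      exact Fin.ext hc
    · have hG : Gfun m n (.inl i) = ⟨i.val + n, by have := i.isLt; omega⟩ := by
        simp only [Gfun, if_neg hA]
      rw [hG]
      have hdvd : ¬ (m + n + 2) ∣ (i.val + n + 2) := by
        intro hd
        have := Nat.le_of_dvd (by omega) hd
        have := i.isLt
        omega
      have hs : rho m n (i.val + (n + 1)) = rho m n i.val + 1 := rho_shift hg _ hdvd
      have h1 : ¬ rho m n (i.val + n + 1) < rho m n 0 := by
        have he : i.val + n + 1 = i.val + (n + 1) := by omega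
        rw [he, hs]; omega
      have h2 : n + 1 ≤ i.val + n + 1 := by omega
      rw [Fc hm hn ⟨i.val + n, by have := i.isLt; omega⟩ h1 h2]
      congr 1
      apply Fin.ext
      show (i.val + n + 1 - n - 1) % m = i.val
      have hc : i.val + n + 1 - n - 1 = i.val := by omega
      rw [hc, Nat.mod_eq_of_lt i.isLt]
  | .inr j =>
    by_cases hA : rho m n (j.val + m + 1) < rho m n 0
    · have hG : Gfun m n (.inr j) = ⟨j.val + m, by have := j.isLt; omega⟩ := by
        simp only [Gfun, if_pos hA]
      rw [hG]
      have h1 : rho m n (j.val + m + 1) < rho m n 0 := hA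
      have h2 : ¬ j.val + m + 1 < m := by omega
      rw [Fb hm hn ⟨j.val + m, by have := j.isLt; omega⟩ h1 h2]
      congr 1
      apply Fin.ext
      show (j.val + m + 1 - m - 1) % n = j.val
      have hc : j.val + m + 1 - m - 1 = j.val := by omega
      rw [hc, Nat.mod_eq_of_lt j.isLt]
    · have hj1 : 1 ≤ j.val := by
        rcases Nat.eq_zero_or_pos j.val with h0 | h0
        · exfalso
          rw [h0] at hA
          exact hA (by simpa using rho_m1_lt hm hn hg)
        · exact h0
      have hG : Gfun m n (.inr j) = ⟨j.val - 1, by have := j.isLt; omega⟩ := by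
        simp only [Gfun, if_neg hA]
      rw [hG]
      have hc : j.val - 1 + 1 = j.val := by omega
      have hdvd : ¬ (m + n + 2) ∣ (j.val + 1) := by
        intro hd
        have := Nat.le_of_dvd (by omega) hd
        have := j.isLt
        omega
      have hjmp := rho_jump hg j.val hdvd
      have h1 : ¬ rho m n (j.val - 1 + 1) < rho m n 0 := by rw [hc]; omega
      have h2 : ¬ n + 1 ≤ j.val - 1 + 1 := by have := j.isLt; omega
      rw [Fd hm hn ⟨j.val - 1, by have := j.isLt; omega⟩ h1 h2]
      congr 1
      apply Fin.ext
      show (j.val - 1 + 1) % n = j.val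
      rw [hc, Nat.mod_eq_of_lt j.isLt]

lemma adjacency (hm : 0 < m) (hn : 0 < n) (hg : Nat.gcd (m + 1) (n + 1) = 1) (x : Fin m ⊕ Fin n) : HRel m n (.inl x) (.inr (Gfun m n x)) := by
  match x with
  | .inl i =>
    show (Gfun m n (.inl i)).val + 1 = i.val ∨ (Gfun m n (.inl i)).val = i.val + n
    by_cases hA : rho m n i.val < rho m n 0
    · left
      have hi1 : 1 ≤ i.val := by
        rcases Nat.eq_zero_or_pos i.val with h0 | h0
        · rw [h0] at hA; omega
        · exact h0
      simp only [Gfun, if_pos hA]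
      omega
    · right
      simp only [Gfun, if_neg hA]
  | .inr j =>
    show (Gfun m n (.inr j)).val + 1 = j.val ∨ (Gfun m n (.inr j)).val = j.val + m
    by_cases hA : rho m n (j.val + m + 1) < rho m n 0
    · right
      simp only [Gfun, if_pos hA]
    · left
      have hj1 : 1 ≤ j.val := by
        rcases Nat.eq_zero_or_pos j.val with h0 | h0
        · exfalso
          rw [h0] at hA
          exact hA (by simpa using rho_m1_lt hm hn hg)
        · exact h0
      simp only [Gfun, if_neg hA]
      omega

end Stmt8Aux

theorem stmt_8 (m n : ℕ) (hm : 0 < m) (hn : 0 < n) (hmn : m ≠ n)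
    (hg : Nat.gcd (m + 1) (n + 1) = 1) :
    ∃ M : (Hgraph m n).Subgraph, M.IsPerfectMatching := by
  classical
  set G := Stmt8Aux.Gfun m n with hGdef
  set F := Stmt8Aux.Ffun m n hm hn with hFdef
  have hFG : ∀ x, F (G x) = x := Stmt8Aux.FG hm hn hg
  have hGinj : Function.Injective G := Function.LeftInverse.injective hFG
  have hcard : Fintype.card (Fin m ⊕ Fin n) = Fintype.card (Fin (m + n)) := by simp
  have hGbij : Function.Bijective G :=
    (Fintype.bijective_iff_injective_and_card G).2 ⟨hGinj, hcard⟩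
  have hGF : ∀ k, G (F k) = k := by
    intro k
    obtain ⟨x, hx⟩ := hGbij.2 k
    rw [← hx, hFG x]
  have hadj : ∀ x, (Hgraph m n).Adj (.inl x) (.inr (G x)) := by
    intro x
    rw [Hgraph, SimpleGraph.fromRel_adj]
    exact ⟨by simp, Or.inl (Stmt8Aux.adjacency hm hn hg x)⟩
  refine ⟨{ verts := Set.univ
            Adj := fun v w =>
              (∃ x, v = .inl x ∧ w = .inr (G x)) ∨ (∃ x, w = .inl x ∧ v = .inr (G x))
            adj_sub := ?_
            edge_vert := fun _ => Set.mem_univ _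
            symm := ?_ }, ?_⟩
  · rintro v w (⟨x, rfl, rfl⟩ | ⟨x, rfl, rfl⟩)
    · exact hadj x
    · exact (hadj x).symm
  · constructor
    rintro v w (⟨x, rfl, rfl⟩ | ⟨x, rfl, rfl⟩)
    · exact Or.inr ⟨x, rfl, rfl⟩
    · exact Or.inl ⟨x, rfl, rfl⟩
  · rw [SimpleGraph.Subgraph.isPerfectMatching_iff]
    intro v
    match v with
    | .inl x =>
      refine ⟨.inr (G x), Or.inl ⟨x, rfl, rfl⟩, ?_⟩
      rintro w (⟨y, hy, rfl⟩ | ⟨y, rfl, hv⟩)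
      · obtain rfl : x = y := Sum.inl.inj hy
        rfl
      · exact absurd hv (by simp)
    | .inr k =>
      refine ⟨.inl (F k), Or.inr ⟨F k, rfl, by rw [hGF k]⟩, ?_⟩
      rintro w (⟨y, hy, rfl⟩ | ⟨y, rfl, hv⟩)
      · exact absurd hy (by simp)
      · obtain hk : k = G y := Sum.inr.inj hv
        have : y = F k := by rw [hk, hFG y]
        rw [this]
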